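/- Let Λ be a lattice of full rank in ℝ^n (n ≥ 1). Then for every δ > 0 there exists a lattice point x ∈ Λ whose first coordinate is at least δ⁻¹ and whose remaining n−1 coordinates all have absolute value at most δ. -/

import Mathlib

/-- Covering radius: a full-rank lattice comes within a bounded distance of every point. -/
lemma covering_lemma (n : ℕ) (Λ : AddSubgroup (Fin n → ℝ))
    (hdisc : DiscreteTopology Λ)
    (hfull : Submodule.span ℝ (Λ : Set (Fin n → ℝ)) = ⊤) :
    ∃ C : ℝ, 0 ≤ C ∧ ∀ y : Fin n → ℝ, ∃ x ∈ Λ, ‖y - x‖ ≤ C := by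
  set L : Submodule ℤ (Fin n → ℝ) := AddSubgroup.toIntSubmodule Λ with hL
  haveI : DiscreteTopology L := hdisc
  haveI : IsZLattice ℝ L := ⟨hfull⟩
  haveI : Module.Finite ℤ L := ZLattice.module_finite ℝ L
  haveI : Module.Free ℤ L := ZLattice.module_free ℝ L
  set b := Module.Free.chooseBasis ℤ L
  set B := Module.Basis.ofZLatticeBasis ℝ L b with hB
  obtain ⟨C, hC⟩ := isBounded_iff_forall_norm_le.mp
    (ZSpan.fundamentalDomain_isBounded B)
  refine ⟨max C 0, le_max_right _ _, fun y => ?_⟩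
  obtain ⟨v, hv, -⟩ := ZSpan.exist_unique_vadd_mem_fundamentalDomain B y
  have hset : (Submodule.span ℤ (Set.range ⇑B) : Set (Fin n → ℝ)) = (L : Set (Fin n → ℝ)) :=
    congrArg SetLike.coe (b.ofZLatticeBasis_span ℝ)
  have hvmem : (v : Fin n → ℝ) ∈ Λ := by
    have h2 : (v : Fin n → ℝ) ∈ (Submodule.span ℤ (Set.range ⇑B) : Set (Fin n → ℝ)) := v.2
    rw [hset] at h2
    exact h2
  refine ⟨-(v : Fin n → ℝ), neg_mem hvmem, ?_⟩
  have h3 : ‖(v : Fin n → ℝ) + y‖ ≤ C := hC _ hv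
  calc ‖y - -(v : Fin n → ℝ)‖ = ‖(v : Fin n → ℝ) + y‖ := by rw [sub_neg_eq_add, add_comm]
    _ ≤ C := h3
    _ ≤ max C 0 := le_max_left _ _

theorem stmt0 (n : ℕ) (hn : 0 < n) (Λ : AddSubgroup (Fin n → ℝ))
    (hdisc : DiscreteTopology Λ)
    (hfull : Submodule.span ℝ (Λ : Set (Fin n → ℝ)) = ⊤) :
    ∀ δ : ℝ, 0 < δ → ∃ x ∈ Λ, δ⁻¹ ≤ x ⟨0, hn⟩ ∧
      ∀ i : Fin n, i ≠ ⟨0, hn⟩ → |x i| ≤ δ := by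
  intro δ hδ
  obtain ⟨C, hC0, hC⟩ := covering_lemma n Λ hdisc hfull
  set i0 : Fin n := ⟨0, hn⟩
  set S : ℝ := 2 * C + δ⁻¹ + 1 with hS
  clear_value S
  -- choose a lattice point near (S*M, 0, ..., 0) for each M : ℕ
  set y : ℕ → Fin n → ℝ := fun M => Pi.single i0 (S * (M : ℝ)) with hy
  choose x hxΛ hxC using fun M : ℕ => hC (y M)
  have hcoord : ∀ (M : ℕ) (i : Fin n), |y M i - x M i| ≤ C := by
    intro M i
    calc |y M i - x M i| = ‖(y M - x M) i‖ := by simp [Real.norm_eq_abs]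
      _ ≤ ‖y M - x M‖ := norm_le_pi_norm _ i
      _ ≤ C := hxC M
  have hside : ∀ (M : ℕ) (i : Fin n), i ≠ i0 → |x M i| ≤ C := by
    intro M i hi
    have h := hcoord M i
    simpa [hy, Pi.single_eq_of_ne hi] using h
  have hfirst : ∀ M : ℕ, |S * M - x M i0| ≤ C := by
    intro M
    have h := hcoord M i0
    simpa [hy, Pi.single_eq_same] using h
  -- pigeonhole
  set N : ℤ := ⌈C / δ⌉ + 1 with hN
  set g : ℕ → Fin n → ℤ := fun M i => if i = i0 then 0 else ⌊x M i / δ⌋ with hg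
  have hmaps : Set.MapsTo g Set.univ {v : Fin n → ℤ | ∀ i, |v i| ≤ N} := by
    intro M _
    intro i
    by_cases hi : i = i0
    · simp only [hg, hi, if_pos rfl, abs_zero, hN]
      have : (0:ℤ) ≤ ⌈C / δ⌉ := Int.ceil_nonneg (by positivity)
      omega
    · have h1 : |x M i| ≤ C := hside M i hi
      have h2 : x M i / δ ≤ C / δ := by
        apply div_le_div_of_nonneg_right (abs_le.mp h1).2 hδ.le
      have h3 : -(C / δ) ≤ x M i / δ := by
        rw [← neg_div]
        exact div_le_div_of_nonneg_right (abs_le.mp h1).1 hδ.le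
      simp only [hg, if_neg hi]
      rw [abs_le]
      constructor
      · rw [Int.le_floor]
        have hce : C / δ ≤ ((⌈C / δ⌉ : ℤ) : ℝ) := Int.le_ceil _
        push_cast [hN]
        linarith
      · have : ⌊x M i / δ⌋ ≤ ⌈C / δ⌉ := (Int.floor_mono h2).trans (Int.floor_le_ceil _)
        omega
  have hfin : ({v : Fin n → ℤ | ∀ i, |v i| ≤ N}).Finite := by
    apply Set.Finite.subset (Set.Finite.pi (fun i : Fin n => Set.finite_Icc (-N) N))
    intro v hv i _
    exact Set.mem_Icc.mpr (abs_le.mp (hv i))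
  obtain ⟨a, -, b, -, hab, hgab⟩ :=
    Set.infinite_univ.exists_ne_map_eq_of_mapsTo hmaps hfin
  -- the main claim, for a < b with equal cells
  have key : ∀ a b : ℕ, a < b → g a = g b →
      ∃ z ∈ Λ, δ⁻¹ ≤ z i0 ∧ ∀ i : Fin n, i ≠ i0 → |z i| ≤ δ := by
    intro a b hlt hgeq
    refine ⟨x b - x a, sub_mem (hxΛ b) (hxΛ a), ?_, ?_⟩
    · have ha := abs_le.mp (hfirst a)
      have hb := abs_le.mp (hfirst b)
      have hba : (1 : ℝ) ≤ (b : ℝ) - (a : ℝ) := by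
        have : (a : ℝ) + 1 ≤ (b : ℝ) := by exact_mod_cast Nat.succ_le_of_lt hlt
        linarith
      have hinv : 0 < δ⁻¹ := inv_pos.mpr hδ
      have hS0 : 0 ≤ S := by rw [hS]; linarith
      have hprod : S * (b : ℝ) - S * (a : ℝ) = S * ((b:ℝ) - (a:ℝ)) := by ring
      have h4 : S ≤ S * ((b:ℝ) - (a:ℝ)) := le_mul_of_one_le_right hS0 hba
      show δ⁻¹ ≤ (x b - x a) i0
      have heval : (x b - x a) i0 = x b i0 - x a i0 := rfl
      rw [heval]
      linarith [ha.1, hb.2, h4, hprod, hS]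
    · intro i hi
      have heq : ⌊x a i / δ⌋ = ⌊x b i / δ⌋ := by
        have := congrFun hgeq i
        simpa [hg, if_neg hi] using this
      have h1 := Int.floor_le (x a i / δ)
      have h2 := Int.lt_floor_add_one (x a i / δ)
      have h3 := Int.floor_le (x b i / δ)
      have h4 := Int.lt_floor_add_one (x b i / δ)
      rw [heq] at h1 h2
      have heval : (x b - x a) i = x b i - x a i := rfl
      have e1 : (x b i / δ - x a i / δ + 1) * δ = x b i - x a i + δ := by field_simp
      have e2 : (x a i / δ - x b i / δ + 1) * δ = x a i - x b i + δ := by field_simp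
      have p1 : 0 < (x b i / δ - x a i / δ + 1) * δ := mul_pos (by linarith) hδ
      have p2 : 0 < (x a i / δ - x b i / δ + 1) * δ := mul_pos (by linarith) hδ
      rw [heval, abs_le]
      constructor <;> linarith
  rcases hab.lt_or_gt with h | h
  · exact key a b h hgab
  · exact key b a h hgab.symm
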